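/- Let G be a Δ-regular finite simple graph of order n and size m with Δ > 0. Then A_{−Δ+2}(G) ≥ m and A_{Δ−2}(G) ≥ n + n₀, where n₀ is the number of cut vertices of G; in particular A_{Δ−2}(G) ≥ n. -/

import Mathlib

open Polynomial Finset

/-- Number of neighbors of `v` inside the set `S` (denoted δ_S(v)). -/
def SimpleGraph.degIn {V : Type*} [Fintype V] [DecidableEq V]
    (G : SimpleGraph V) [DecidableRel G.Adj] (S : Finset V) (v : V) : ℕ :=
  (S.filter (fun u => G.Adj v u)).card

/-- Number of neighbors of `v` outside the set `S` (denoted δ_{S̄}(v)). -/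
def SimpleGraph.degOut {V : Type*} [Fintype V] [DecidableEq V]
    (G : SimpleGraph V) [DecidableRel G.Adj] (S : Finset V) (v : V) : ℕ :=
  (Sᶜ.filter (fun u => G.Adj v u)).card

/-- `S` is an exact defensive `k`-alliance in `G`: the induced subgraph `⟨S⟩` is connected
(in particular `S` is nonempty) and `k = k_S = min_{v ∈ S} (δ_S(v) - δ_{S̄}(v))`. -/
def SimpleGraph.IsExactAlliance {V : Type*} [Fintype V] [DecidableEq V]
    (G : SimpleGraph V) [DecidableRel G.Adj] (S : Finset V) (k : ℤ) : Prop :=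
  (G.induce (S : Set V)).Connected ∧
    (∀ v ∈ S, k ≤ (G.degIn S v : ℤ) - (G.degOut S v : ℤ)) ∧
    (∃ v ∈ S, (G.degIn S v : ℤ) - (G.degOut S v : ℤ) = k)

/-- `A_k(G)`: the number of exact defensive `k`-alliances in `G`. -/
noncomputable def SimpleGraph.allianceCoeff {V : Type*} [Fintype V] [DecidableEq V]
    (G : SimpleGraph V) [DecidableRel G.Adj] (k : ℤ) : ℕ :=
  Set.ncard {S : Finset V | G.IsExactAlliance S k}

/-- The alliance polynomial `A(G;x) = Σ_{k=-Δ}^{Δ} A_k(G) x^{n+k}`, where `n` is the order and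
`Δ` the maximum degree of `G`, regarded as a real polynomial. -/
noncomputable def SimpleGraph.alliancePoly {V : Type*} [Fintype V] [DecidableEq V]
    (G : SimpleGraph V) [DecidableRel G.Adj] : Polynomial ℝ :=
  ∑ k ∈ Finset.Icc (-(G.maxDegree : ℤ)) (G.maxDegree : ℤ),
    (G.allianceCoeff k : ℝ) • X ^ (((Fintype.card V : ℤ) + k).toNat)

/-- `v` is a cut vertex of `G`: removing `v` (and its incident edges) yields a graph with
more connected components than `G`. -/
def SimpleGraph.IsCutVertex {V : Type*} (G : SimpleGraph V) (v : V) : Prop :=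
  Nat.card G.ConnectedComponent <
    Nat.card (G.induce {u : V | u ≠ v}).ConnectedComponent

section Aux
variable {V : Type*} [Fintype V] [DecidableEq V]
    (G : SimpleGraph V) [DecidableRel G.Adj]

lemma degIn_add_degOut (S : Finset V) (v : V) :
    G.degIn S v + G.degOut S v = G.degree v := by
  classical
  rw [SimpleGraph.degIn, SimpleGraph.degOut, ← Finset.card_union_of_disjoint, ←
    Finset.filter_union, Finset.union_compl]
  · simp [SimpleGraph.degree, SimpleGraph.neighborFinset, Finset.filter_eq',
      SimpleGraph.neighborFinset_eq_filter]
  · exact Finset.disjoint_filter_filter (disjoint_compl_right)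

variable {G}

lemma reachable_induce_of_walk {S : Set V} : ∀ {a b : V} (p : G.Walk a b)
    (hp : ∀ x ∈ p.support, x ∈ S),
    (G.induce S).Reachable ⟨a, hp a p.start_mem_support⟩ ⟨b, hp b p.end_mem_support⟩ := by
  intro a b p
  induction p with
  | nil => intro hp; rfl
  | @cons a x b h q ih =>
    intro hp
    have hx : ∀ y ∈ q.support, y ∈ S := fun y hy => hp y (by simp [hy])
    refine SimpleGraph.Reachable.trans ?_ (ih hx)
    exact SimpleGraph.Adj.reachable (by simpa using h)

open Classical in
noncomputable def piece (G : SimpleGraph V) (v u : V) : Finset V :=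
  Finset.univ.filter (fun w => w ≠ v ∧ ∃ p : G.Walk w u, v ∉ p.support)

lemma mem_piece {v u w : V} :
    w ∈ piece G v u ↔ w ≠ v ∧ ∃ p : G.Walk w u, v ∉ p.support := by
  simp [piece]

lemma self_mem_piece {v u : V} (h : u ≠ v) : u ∈ piece G v u :=
  mem_piece.2 ⟨h, SimpleGraph.Walk.nil, by simp [Ne.symm h]⟩

lemma piece_closed {v u w x : V} (hw : w ∈ piece G v u) (hadj : G.Adj x w)
    (hx : x ≠ v) : x ∈ piece G v u := by
  obtain ⟨hwv, p, hp⟩ := mem_piece.1 hw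
  exact mem_piece.2 ⟨hx, p.cons hadj, by simp [Ne.symm hx, hp]⟩

lemma not_mem_piece {v u : V} : v ∉ piece G v u := fun h => (mem_piece.1 h).1 rfl

/-- the unique outside vertex adjacent to a piece is v -/
lemma eq_of_adj_not_mem_piece {v u w x : V} (hw : w ∈ piece G v u)
    (hadj : G.Adj w x) (hx : x ∉ piece G v u) : x = v := by
  by_contra hxv
  exact hx (piece_closed hw hadj.symm hxv)

lemma piece_connected {v u : V} (hu : u ≠ v) :
    (G.induce ((piece G v u : Finset V) : Set V)).Connected := by
  haveI : Nonempty ((piece G v u : Finset V) : Set V) :=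
    ⟨⟨u, by simpa using self_mem_piece hu⟩⟩
  constructor
  rintro ⟨a, ha⟩ ⟨b, hb⟩
  have key : ∀ {c : V} (hc : c ∈ piece G v u),
      (G.induce ((piece G v u : Finset V) : Set V)).Reachable ⟨c, by simpa using hc⟩
        ⟨u, by simpa using self_mem_piece hu⟩ := by
    intro c hc
    obtain ⟨hcv, p, hp⟩ := mem_piece.1 hc
    have hsupp : ∀ x ∈ p.support, x ∈ ((piece G v u : Finset V) : Set V) := by
      intro x hx
      have : v ∉ (p.dropUntil x hx).support :=
        fun h => hp (p.support_dropUntil_subset hx h)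
      have hxv : x ≠ v := fun h => hp (h ▸ hx)
      simpa using mem_piece.2 ⟨hxv, p.dropUntil x hx, this⟩
    exact reachable_induce_of_walk p hsupp
  exact (key (by simpa using ha)).trans (key (by simpa using hb)).symm

lemma piece_alliance {Δ : ℕ} (hreg : G.IsRegularOfDegree Δ) {v u : V}
    (hadj : G.Adj v u) : G.IsExactAlliance (piece G v u) ((Δ : ℤ) - 2) := by
  have hu : u ≠ v := hadj.ne'
  have hdegOut : ∀ w ∈ piece G v u, G.degOut (piece G v u) w ≤ 1 := by
    intro w hw
    have : (piece G v u)ᶜ.filter (fun x => G.Adj w x) ⊆ {v} := by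
      intro x hx
      simp only [Finset.mem_filter, Finset.mem_compl] at hx
      simp [eq_of_adj_not_mem_piece hw hx.2 hx.1]
    simpa [SimpleGraph.degOut] using Finset.card_le_card this
  have hdiff : ∀ w ∈ piece G v u,
      (G.degIn (piece G v u) w : ℤ) - G.degOut (piece G v u) w
        = (Δ : ℤ) - 2 * G.degOut (piece G v u) w := by
    intro w hw
    have := degIn_add_degOut G (piece G v u) w
    rw [hreg w] at this
    omega
  refine ⟨piece_connected hu, ?_, ?_⟩
  · intro w hw
    rw [hdiff w hw]
    have := hdegOut w hw
    omega
  · refine ⟨u, self_mem_piece hu, ?_⟩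
    rw [hdiff u (self_mem_piece hu)]
    have h1 : G.degOut (piece G v u) u = 1 := by
      refine le_antisymm (hdegOut u (self_mem_piece hu)) ?_
      have : v ∈ (piece G v u)ᶜ.filter (fun x => G.Adj u x) := by
        simp [not_mem_piece, hadj.symm]
      simpa [SimpleGraph.degOut] using Finset.card_pos.2 ⟨v, this⟩
    rw [h1]; push_cast; ring

lemma piece_eq_unique {v u v' u' : V} (hadj : G.Adj v u) (hadj' : G.Adj v' u')
    (h : piece G v u = piece G v' u') : v = v' := by
  by_contra hne
  have huS : u ∈ piece G v' u' := h ▸ self_mem_piece hadj.ne'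
  have hvS : v ∉ piece G v' u' := h ▸ not_mem_piece
  exact hne (eq_of_adj_not_mem_piece huS hadj.symm hvS)

end Aux

section Aux2
set_option linter.unusedSectionVars false
variable {V : Type*} [Fintype V] [DecidableEq V]
    {G : SimpleGraph V} [DecidableRel G.Adj]

lemma pair_alliance {Δ : ℕ} (hreg : G.IsRegularOfDegree Δ) {a b : V}
    (hadj : G.Adj a b) : G.IsExactAlliance {a, b} (-(Δ : ℤ) + 2) := by
  have hab : a ≠ b := hadj.ne
  have hconn : (G.induce (({a, b} : Finset V) : Set V)).Connected := by
    haveI : Nonempty (({a, b} : Finset V) : Set V) := ⟨⟨a, by simp⟩⟩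
    constructor
    have key : (G.induce (({a, b} : Finset V) : Set V)).Reachable
        ⟨a, by simp⟩ ⟨b, by simp⟩ := by
      have hw : ∀ x ∈ (SimpleGraph.Walk.cons hadj SimpleGraph.Walk.nil).support,
          x ∈ (({a, b} : Finset V) : Set V) := by intro x hx; simp at hx ⊢; tauto
      exact reachable_induce_of_walk _ hw
    rintro ⟨x, hx⟩ ⟨y, hy⟩
    simp only [Finset.coe_insert, Set.mem_insert_iff, Finset.coe_singleton,
      Set.mem_singleton_iff] at hx hy
    rcases hx with rfl | rfl <;> rcases hy with rfl | rfl
    · rfl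
    · exact key
    · exact key.symm
    · rfl
  have hdegIn : ∀ x ∈ ({a, b} : Finset V), G.degIn {a, b} x = 1 := by
    intro x hx
    simp only [Finset.mem_insert, Finset.mem_singleton] at hx
    rcases hx with rfl | rfl
    · have : ({x, b} : Finset V).filter (fun u => G.Adj x u) = {b} := by
        ext y
        simp only [Finset.mem_filter, Finset.mem_insert, Finset.mem_singleton]
        constructor
        · rintro ⟨rfl | rfl, h⟩
          · exact absurd h (G.irrefl)
          · rfl
        · rintro rfl; exact ⟨Or.inr rfl, hadj⟩
      simp [SimpleGraph.degIn, this]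
    · have : ({a, x} : Finset V).filter (fun u => G.Adj x u) = {a} := by
        ext y
        simp only [Finset.mem_filter, Finset.mem_insert, Finset.mem_singleton]
        constructor
        · rintro ⟨rfl | rfl, h⟩
          · rfl
          · exact absurd h (G.irrefl)
        · rintro rfl; exact ⟨Or.inl rfl, hadj.symm⟩
      simp [SimpleGraph.degIn, this]
  have hdiff : ∀ x ∈ ({a, b} : Finset V),
      (G.degIn {a, b} x : ℤ) - G.degOut {a, b} x = -(Δ : ℤ) + 2 := by
    intro x hx
    have h1 := degIn_add_degOut G {a, b} x
    rw [hreg x, hdegIn x hx] at h1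
    have hΔ1 : 1 ≤ Δ := by omega
    rw [hdegIn x hx]
    omega
  exact ⟨hconn, fun x hx => le_of_eq (hdiff x hx).symm,
    ⟨a, by simp, hdiff a (by simp)⟩⟩

lemma lift_reach {v : V}
    (hyp : ∀ w₁ w₂ (h1 : G.Adj v w₁) (h2 : G.Adj v w₂),
      (G.induce {u : V | u ≠ v}).Reachable ⟨w₁, h1.ne'⟩ ⟨w₂, h2.ne'⟩) :
    ∀ n {a b : V} (ha : a ≠ v) (hb : b ≠ v) (p : G.Walk a b), p.length ≤ n →
      (G.induce {u : V | u ≠ v}).Reachable ⟨a, ha⟩ ⟨b, hb⟩ := by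
  intro n
  induction n with
  | zero =>
    intro a b ha hb p hlen
    cases p with
    | nil => rfl
    | cons h q => simp at hlen
  | succ n ih =>
    intro a b ha hb p hlen
    cases p with
    | nil => rfl
    | @cons _ x _ h q =>
      by_cases hx : x = v
      · have hav : G.Adj v a := (hx ▸ h).symm
        have hq : (q.copy hx rfl).length = q.length := SimpleGraph.Walk.length_copy q hx rfl
        have hlen' : q.length + 1 ≤ n + 1 := by simpa using hlen
        generalize q.copy hx rfl = q2 at hq
        cases q2 with
        | nil => exact absurd rfl hb
        | @cons _ y _ h' q' =>
          have hy : y ≠ v := h'.ne'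
          have r1 : (G.induce {u : V | u ≠ v}).Reachable ⟨a, ha⟩ ⟨y, hy⟩ :=
            hyp a y hav h'
          have r2 := ih hy hb q' (by simp at hq; omega)
          exact r1.trans r2
      · have r1 : (G.induce {u : V | u ≠ v}).Adj ⟨a, ha⟩ ⟨x, hx⟩ := by simpa using h
        exact r1.reachable.trans (ih hx hb q (by simp at hlen; omega))

lemma exists_two_pieces {v : V} (hcut : G.IsCutVertex v) :
    ∃ u₁ u₂, G.Adj v u₁ ∧ G.Adj v u₂ ∧ piece G v u₁ ≠ piece G v u₂ := by
  by_contra hcon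
  push_neg at hcon
  set H := G.induce {u : V | u ≠ v} with hH
  have hyp : ∀ w₁ w₂ (h1 : G.Adj v w₁) (h2 : G.Adj v w₂),
      H.Reachable ⟨w₁, h1.ne'⟩ ⟨w₂, h2.ne'⟩ := by
    intro w₁ w₂ h1 h2
    have := hcon w₁ w₂ h1 h2
    have hmem : w₁ ∈ piece G v w₂ := this ▸ self_mem_piece h1.ne'
    obtain ⟨_, p, hp⟩ := mem_piece.1 hmem
    exact reachable_induce_of_walk p
      (fun x hx => (fun hxy : x = v => hp (hxy ▸ hx) : x ≠ v))
  have hwd : ∀ (a b : {u : V | u ≠ v}) (p : H.Walk a b), p.IsPath →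
      G.connectedComponentMk a.1 = G.connectedComponentMk b.1 := by
    intro a b p hip
    clear hip
    induction p with
    | nil => rfl
    | cons h q ih =>
      exact (SimpleGraph.ConnectedComponent.sound
        (SimpleGraph.Adj.reachable (by simpa [hH] using h))).trans ih
  let ψ : H.ConnectedComponent → G.ConnectedComponent :=
    SimpleGraph.ConnectedComponent.lift (fun w => G.connectedComponentMk w.1) hwd
  have hinj : Function.Injective ψ := by
    intro c d
    refine SimpleGraph.ConnectedComponent.ind₂ (fun a b hab => ?_) c d
    have hr : G.Reachable a.1 b.1 := by
      apply SimpleGraph.ConnectedComponent.exact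
      simpa [ψ] using hab
    obtain ⟨p⟩ := hr
    exact SimpleGraph.ConnectedComponent.sound
      (by simpa using lift_reach hyp p.length a.2 b.2 p le_rfl)
  have hle : Nat.card H.ConnectedComponent ≤ Nat.card G.ConnectedComponent :=
    Nat.card_le_card_of_injective _ hinj
  exact absurd hcut (not_lt.2 hle)

end Aux2


/-- For a Δ-regular graph with Δ > 0, order `n`, size `m` and `n₀` cut vertices:
`A_{-Δ+2}(G) ≥ m` and `A_{Δ-2}(G) ≥ n + n₀`; in particular `A_{Δ-2}(G) ≥ n`. -/
theorem allianceCoeff_bounds_of_regular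
    {V : Type*} [Fintype V] [DecidableEq V]
    (G : SimpleGraph V) [DecidableRel G.Adj] (Δ : ℕ) (hΔ : 0 < Δ)
    (hreg : G.IsRegularOfDegree Δ) :
    G.edgeFinset.card ≤ G.allianceCoeff (-(Δ : ℤ) + 2) ∧
    Fintype.card V + Set.ncard {v : V | G.IsCutVertex v} ≤ G.allianceCoeff ((Δ : ℤ) - 2) ∧
    Fintype.card V ≤ G.allianceCoeff ((Δ : ℤ) - 2) := by
  classical
  have hcoeff : ∀ k : ℤ, G.allianceCoeff k =
      (Finset.univ.filter (fun S : Finset V => G.IsExactAlliance S k)).card := by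
    intro k
    rw [SimpleGraph.allianceCoeff, show {S : Finset V | G.IsExactAlliance S k} =
      ((Finset.univ.filter (fun S : Finset V => G.IsExactAlliance S k) :
        Finset (Finset V)) : Set (Finset V)) by ext S; simp]
    exact Set.ncard_coe_finset _
  -- Part 1
  have part1 : G.edgeFinset.card ≤ G.allianceCoeff (-(Δ : ℤ) + 2) := by
    rw [hcoeff]
    apply Finset.card_le_card_of_injOn
      (fun e => Sym2.lift ⟨fun a b => ({a, b} : Finset V),
        fun a b => Finset.pair_comm a b⟩ e)
    · intro e he
      induction e using Sym2.ind with
      | _ a b =>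
        have hadj : G.Adj a b := by
          rwa [Finset.mem_coe, SimpleGraph.mem_edgeFinset, SimpleGraph.mem_edgeSet] at he
        simpa using pair_alliance hreg hadj
    · intro e1 h1 e2 h2 heq
      induction e1 using Sym2.ind with
      | _ a b =>
        induction e2 using Sym2.ind with
        | _ c d =>
          have hab : a ≠ b := by
            rw [Finset.mem_coe, SimpleGraph.mem_edgeFinset, SimpleGraph.mem_edgeSet] at h1
            exact h1.ne
          simp only [Sym2.lift_mk] at heq
          have ha : a = c ∨ a = d := by
            have : a ∈ ({c, d} : Finset V) := heq ▸ Finset.mem_insert_self a {b}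
            simpa using this
          have hb2 : b = c ∨ b = d := by
            have : b ∈ ({a, b} : Finset V) := by simp
            rw [heq] at this
            simpa using this
          rw [Sym2.eq_iff]
          rcases ha with h | h
          · refine Or.inl ⟨h, ?_⟩
            rcases hb2 with h' | h'
            · exact absurd (h.trans h'.symm) hab
            · exact h'
          · refine Or.inr ⟨h, ?_⟩
            rcases hb2 with h' | h'
            · exact h'
            · exact absurd (h.trans h'.symm) hab
  -- Part 2
  have part2 : Fintype.card V + Set.ncard {v : V | G.IsCutVertex v} ≤
      G.allianceCoeff ((Δ : ℤ) - 2) := by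
    rw [hcoeff]
    set A := Finset.univ.filter
      (fun S : Finset V => G.IsExactAlliance S ((Δ : ℤ) - 2)) with hA
    set F : V → Finset (Finset V) :=
      fun v => (G.neighborFinset v).image (fun u => piece G v u) with hF
    have hFA : ∀ v, F v ⊆ A := by
      intro v S hS
      obtain ⟨u, hu, rfl⟩ := Finset.mem_image.1 hS
      rw [SimpleGraph.mem_neighborFinset] at hu
      exact Finset.mem_filter.2 ⟨Finset.mem_univ _, piece_alliance hreg hu⟩
    have hdisj : ∀ v ∈ Finset.univ, ∀ v' ∈ Finset.univ, v ≠ v' →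
        Disjoint (F v) (F v') := by
      intro v _ v' _ hne
      rw [Finset.disjoint_left]
      intro S hS hS'
      obtain ⟨u, hu, rfl⟩ := Finset.mem_image.1 hS
      obtain ⟨u', hu', heq⟩ := Finset.mem_image.1 hS'
      rw [SimpleGraph.mem_neighborFinset] at hu hu'
      exact hne (piece_eq_unique hu' hu heq).symm
    have hcard : ∀ v : V, (if G.IsCutVertex v then 2 else 1) ≤ (F v).card := by
      intro v
      have hnb : ∃ u, G.Adj v u := by
        rw [← SimpleGraph.degree_pos_iff_exists_adj, hreg v]; exact hΔ
      split_ifs with hcut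
      · obtain ⟨u₁, u₂, h1, h2, hne⟩ := exists_two_pieces hcut
        have hsub : ({piece G v u₁, piece G v u₂} : Finset (Finset V)) ⊆ F v := by
          intro S hS
          simp only [Finset.mem_insert, Finset.mem_singleton] at hS
          rcases hS with rfl | rfl
          · exact Finset.mem_image_of_mem _ ((SimpleGraph.mem_neighborFinset _ _ _).2 h1)
          · exact Finset.mem_image_of_mem _ ((SimpleGraph.mem_neighborFinset _ _ _).2 h2)
        calc 2 = ({piece G v u₁, piece G v u₂} : Finset (Finset V)).card :=
              (Finset.card_pair hne).symm
          _ ≤ (F v).card := Finset.card_le_card hsub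
      · obtain ⟨u, hu⟩ := hnb
        exact Finset.card_pos.2
          ⟨piece G v u, Finset.mem_image_of_mem _ ((SimpleGraph.mem_neighborFinset _ _ _).2 hu)⟩
    have hncard : Set.ncard {v : V | G.IsCutVertex v} =
        (Finset.univ.filter (fun v => G.IsCutVertex v)).card := by
      rw [show {v : V | G.IsCutVertex v} =
        ((Finset.univ.filter (fun v => G.IsCutVertex v) : Finset V) : Set V) by ext x; simp]
      exact Set.ncard_coe_finset _
    calc Fintype.card V + Set.ncard {v : V | G.IsCutVertex v}
        = ∑ v : V, (if G.IsCutVertex v then 2 else 1) := by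
          rw [hncard]
          rw [Finset.sum_ite, Finset.sum_const, Finset.sum_const]
          simp only [smul_eq_mul]
          have hpart := Finset.card_filter_add_card_filter_not
            (s := (Finset.univ : Finset V)) (p := fun v => G.IsCutVertex v)
          rw [Finset.card_univ] at hpart
          omega
      _ ≤ ∑ v : V, (F v).card := Finset.sum_le_sum (fun v _ => hcard v)
      _ = (Finset.univ.biUnion F).card := (Finset.card_biUnion hdisj).symm
      _ ≤ A.card := Finset.card_le_card (Finset.biUnion_subset.2 (fun v _ => hFA v))
  exact ⟨part1, part2, le_trans (Nat.le_add_right _ _) part2⟩
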